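/- Let E_1, E_2, ... be i.i.d. unit exponential random variables, γ > 0, f : ℕ → ℝ increasing with f(0) = 0, and Δf(j) = f(j) - f(j-1). Define W_k(f) = Σ_{j=1}^{k} Δf(j) ( exp(-γ Σ_{h=j}^{k} E_h/h) - E[exp(-γ Σ_{h=j}^{k} E_h/h)] ) and γ(k) = (1 + γ/k)^{-1}. Then with respect to the filtration F_k = σ(E_1,...,E_k), the conditional expectation satisfies E(W_{k+1}(f) | F_k) = γ(k+1) W_k(f). -/

import Mathlib

open MeasureTheory ProbabilityTheory Real Finset

lemma exp_integral_expMeasure_aux {t : ℝ} (ht : 0 < t) :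
    ∫ x, Real.exp (-(t * x)) ∂(expMeasure 1) = (1 + t)⁻¹ := by
  have h1t : (0:ℝ) < 1 + t := by linarith
  rw [expMeasure, gammaMeasure]
  rw [show gammaPDF 1 1 = fun x => ((Real.toNNReal (gammaPDFReal 1 1 x) : NNReal) : ENNReal) from rfl]
  rw [integral_withDensity_eq_integral_smul ((measurable_gammaPDFReal 1 1).real_toNNReal)]
  have heq : (fun x => (Real.toNNReal (gammaPDFReal 1 1 x) : NNReal) • rexp (-(t*x)))
      = Set.indicator (Set.Ici (0:ℝ)) (fun x => rexp (-((1+t)*x))) := by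
    funext x
    simp only [gammaPDFReal, Real.Gamma_one, Real.rpow_one, sub_self, Real.rpow_zero]
    by_cases hx : 0 ≤ x
    · rw [if_pos hx, Set.indicator_of_mem (Set.mem_Ici.mpr hx)]
      simp only [NNReal.smul_def, smul_eq_mul, div_one, mul_one, one_mul]
      rw [Real.coe_toNNReal _ (Real.exp_pos _).le, ← Real.exp_add]
      ring_nf
    · rw [if_neg hx, Set.indicator_of_notMem (by simpa using hx)]
      simp
  rw [heq, integral_indicator measurableSet_Ici, integral_Ici_eq_integral_Ioi]
  have h2 := integral_exp_neg_mul_rpow one_pos h1t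
  simp_rw [Real.rpow_one] at h2
  simp_rw [neg_mul] at h2 ⊢
  rw [h2]
  norm_num [Real.Gamma_two, Real.rpow_neg_one]

lemma expMeasure_one_Iio_zero : expMeasure 1 (Set.Iio 0) = 0 := by
  rw [expMeasure, gammaMeasure, withDensity_apply _ measurableSet_Iio]
  exact lintegral_gammaPDF_of_nonpos le_rfl

lemma alg_aux {α : Type*} (s : Finset α) (S c d : α → ℝ) (m b : ℝ) :
    (∑ j ∈ s, d j * S j + b * 1) * m - (∑ j ∈ s, d j * (c j * m) + b * (1 * m))
      = m * ∑ j ∈ s, d j * (S j - c j) := by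
  calc (∑ j ∈ s, d j * S j + b * 1) * m - (∑ j ∈ s, d j * (c j * m) + b * (1 * m))
      = (∑ j ∈ s, d j * S j) * m - ∑ j ∈ s, d j * (c j * m) := by ring
    _ = ∑ j ∈ s, (d j * S j * m - d j * (c j * m)) := by
        rw [Finset.sum_mul, Finset.sum_sub_distrib]
    _ = ∑ j ∈ s, m * (d j * (S j - c j)) := Finset.sum_congr rfl fun j _ => by ring
    _ = m * ∑ j ∈ s, d j * (S j - c j) := by rw [Finset.mul_sum]

theorem condexp_W_succ
    {Ω : Type*} [m0 : MeasurableSpace Ω] {μ : Measure Ω} [IsProbabilityMeasure μ]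
    (E : ℕ → Ω → ℝ) (hsm : ∀ i, StronglyMeasurable (E i))
    (hindep : iIndepFun E μ)
    (hexp : ∀ i, μ.map (E i) = expMeasure 1)
    (γ : ℝ) (hγ : 0 < γ)
    (f : ℕ → ℝ) (hf : Monotone f) (hf0 : f 0 = 0)
    (W : ℕ → Ω → ℝ)
    (hW : ∀ k ω, W k ω = ∑ j ∈ Finset.Icc 1 k, (f j - f (j - 1)) *
        (Real.exp (-γ * ∑ h ∈ Finset.Icc j k, E h ω / h)
          - ∫ ω', Real.exp (-γ * ∑ h ∈ Finset.Icc j k, E h ω' / h) ∂μ))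
    (k : ℕ) (hk : 1 ≤ k) :
    μ[W (k + 1) | (MeasureTheory.Filtration.natural E hsm) k]
      =ᵐ[μ] fun ω => (1 + γ / (k + 1))⁻¹ * W k ω := by
  have hle : (MeasureTheory.Filtration.natural E hsm) k ≤ m0 :=
    (MeasureTheory.Filtration.natural E hsm).le k
  -- abbreviations (as plain defs via let-free approach)
  -- S j ω = rexp (-γ * ∑ h ∈ Icc j k, E h ω / h), g ω = rexp (-γ * (E (k+1) ω / ↑(k+1)))
  -- a.e. nonnegativity of the E i
  have hE0 : ∀ᵐ ω ∂μ, ∀ i, 0 ≤ E i ω := by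
    rw [ae_all_iff]
    intro i
    have hset : {ω | ¬ 0 ≤ E i ω} = E i ⁻¹' Set.Iio 0 := by
      ext ω; simp [not_le]
    rw [ae_iff, hset, ← Measure.map_apply (hsm i).measurable measurableSet_Iio, hexp i]
    exact expMeasure_one_Iio_zero
  -- measurability w.r.t. the natural filtration
  have hnat : ∀ i, i ≤ k → StronglyMeasurable[(MeasureTheory.Filtration.natural E hsm) k] (E i) := by
    intro i hi
    have h1 : MeasurableSpace.comap (E i) inferInstance
        ≤ (MeasureTheory.Filtration.natural E hsm) k :=
      le_biSup (fun j => MeasurableSpace.comap (E j) inferInstance) hi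
    exact ((comap_measurable (E i)).stronglyMeasurable).mono h1
  have hS_meas : ∀ j, StronglyMeasurable[(MeasureTheory.Filtration.natural E hsm) k]
      (fun ω => rexp (-γ * ∑ h ∈ Finset.Icc j k, E h ω / (h:ℝ))) := by
    intro j
    have hsum : StronglyMeasurable[(MeasureTheory.Filtration.natural E hsm) k]
        (fun ω => ∑ h ∈ Finset.Icc j k, E h ω / (h:ℝ)) :=
      Finset.stronglyMeasurable_fun_sum _ fun h hh => by
        simpa only [div_eq_mul_inv] using (hnat h (Finset.mem_Icc.1 hh).2).mul_const ((h:ℝ))⁻¹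
    exact Real.continuous_exp.comp_stronglyMeasurable (hsum.const_mul (-γ))
  have hS_meas0 : ∀ j, StronglyMeasurable
      (fun ω => rexp (-γ * ∑ h ∈ Finset.Icc j k, E h ω / (h:ℝ))) :=
    fun j => (hS_meas j).mono hle
  have hg_meas0 : StronglyMeasurable (fun ω => rexp (-γ * (E (k+1) ω / ((k+1 : ℕ):ℝ)))) := by
    have h1 : StronglyMeasurable (fun ω => E (k+1) ω / ((k+1 : ℕ):ℝ)) := by
      simpa only [div_eq_mul_inv] using (hsm (k+1)).mul_const (((k+1 : ℕ):ℝ))⁻¹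
    exact Real.continuous_exp.comp_stronglyMeasurable (h1.const_mul (-γ))
  -- integrability: everything is bounded by 1 a.e.
  have hexp_le : ∀ x : ℝ, 0 ≤ x → rexp (-γ * x) ≤ 1 := by
    intro x hx
    rw [Real.exp_le_one_iff]
    nlinarith
  have hsum_nn : ∀ (s : Finset ℕ) (ω : Ω), (∀ i, 0 ≤ E i ω) →
      0 ≤ ∑ h ∈ s, E h ω / (h:ℝ) :=
    fun s ω h0 => Finset.sum_nonneg fun h _ => div_nonneg (h0 h) (Nat.cast_nonneg h)
  have hg_int : Integrable (fun ω => rexp (-γ * (E (k+1) ω / ((k+1 : ℕ):ℝ)))) μ := by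
    refine ⟨hg_meas0.aestronglyMeasurable, HasFiniteIntegral.of_bounded (C := 1) ?_⟩
    filter_upwards [hE0] with ω h0
    rw [Real.norm_eq_abs, abs_of_pos (Real.exp_pos _)]
    exact hexp_le _ (div_nonneg (h0 _) (Nat.cast_nonneg _))
  have hS_int : ∀ j, Integrable (fun ω => rexp (-γ * ∑ h ∈ Finset.Icc j k, E h ω / (h:ℝ))) μ := by
    intro j
    refine ⟨(hS_meas0 j).aestronglyMeasurable, HasFiniteIntegral.of_bounded (C := 1) ?_⟩
    filter_upwards [hE0] with ω h0
    rw [Real.norm_eq_abs, abs_of_pos (Real.exp_pos _)]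
    exact hexp_le _ (hsum_nn _ ω h0)
  have hSg_int : ∀ j, Integrable (fun ω =>
      rexp (-γ * ∑ h ∈ Finset.Icc j k, E h ω / (h:ℝ))
        * rexp (-γ * (E (k+1) ω / ((k+1 : ℕ):ℝ)))) μ := by
    intro j
    refine ⟨((hS_meas0 j).mul hg_meas0).aestronglyMeasurable,
      HasFiniteIntegral.of_bounded (C := 1) ?_⟩
    filter_upwards [hE0] with ω h0
    rw [Real.norm_eq_abs, abs_of_pos (mul_pos (Real.exp_pos _) (Real.exp_pos _))]
    exact mul_le_one₀ (hexp_le _ (hsum_nn _ ω h0)) (Real.exp_pos _).le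
      (hexp_le _ (div_nonneg (h0 _) (Nat.cast_nonneg _)))
  -- conditional expectation of g
  have hg_comap : StronglyMeasurable[MeasurableSpace.comap (E (k+1)) inferInstance]
      (fun ω => rexp (-γ * (E (k+1) ω / ((k+1 : ℕ):ℝ)))) := by
    have hφ : Measurable (fun x : ℝ => rexp (-γ * (x / ((k+1 : ℕ):ℝ)))) :=
      (Real.continuous_exp.comp (by fun_prop)).measurable
    exact (hφ.comp (comap_measurable (E (k+1)))).stronglyMeasurable
  have hcondg : μ[(fun ω => rexp (-γ * (E (k+1) ω / ((k+1 : ℕ):ℝ))))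
        | (MeasureTheory.Filtration.natural E hsm) k]
      =ᵐ[μ] fun _ => ∫ ω, rexp (-γ * (E (k+1) ω / ((k+1 : ℕ):ℝ))) ∂μ :=
    condExp_indep_eq (hsm (k+1)).measurable.comap_le hle hg_comap
      (hindep.indep_comap_natural_of_lt hsm (lt_add_one k))
  -- value of the mean of g
  have hm : ∫ ω, rexp (-γ * (E (k+1) ω / ((k+1 : ℕ):ℝ))) ∂μ = (1 + γ / ((k+1 : ℕ):ℝ))⁻¹ := by
    have hφc : Continuous (fun x : ℝ => rexp (-γ * (x / ((k+1 : ℕ):ℝ)))) :=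
      Real.continuous_exp.comp (by fun_prop)
    rw [← integral_map (hsm (k+1)).measurable.aemeasurable hφc.aestronglyMeasurable, hexp (k+1)]
    have h2 : ∀ x : ℝ, -γ * (x / ((k+1 : ℕ):ℝ)) = -(γ / ((k+1 : ℕ):ℝ) * x) := fun x => by ring
    simp_rw [h2]
    rw [exp_integral_expMeasure_aux (div_pos hγ (by positivity))]
  -- conditional expectation of S j * g
  have hSg_cond : ∀ j, μ[(fun ω =>
        rexp (-γ * ∑ h ∈ Finset.Icc j k, E h ω / (h:ℝ))
          * rexp (-γ * (E (k+1) ω / ((k+1 : ℕ):ℝ))))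
        | (MeasureTheory.Filtration.natural E hsm) k]
      =ᵐ[μ] fun ω => rexp (-γ * ∑ h ∈ Finset.Icc j k, E h ω / (h:ℝ))
          * ∫ ω', rexp (-γ * (E (k+1) ω' / ((k+1 : ℕ):ℝ))) ∂μ := by
    intro j
    refine (condExp_mul_of_stronglyMeasurable_left (hS_meas j) (hSg_int j) hg_int).trans ?_
    filter_upwards [hcondg] with ω hω
    simp only [Pi.mul_apply, hω]
  -- product rule for the integrals
  have hQ : ∀ j, ∫ ω, rexp (-γ * ∑ h ∈ Finset.Icc j k, E h ω / (h:ℝ))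
        * rexp (-γ * (E (k+1) ω / ((k+1 : ℕ):ℝ))) ∂μ
      = (∫ ω, rexp (-γ * ∑ h ∈ Finset.Icc j k, E h ω / (h:ℝ)) ∂μ)
        * ∫ ω, rexp (-γ * (E (k+1) ω / ((k+1 : ℕ):ℝ))) ∂μ := by
    intro j
    rw [← integral_condExp hle (f := fun ω =>
      rexp (-γ * ∑ h ∈ Finset.Icc j k, E h ω / (h:ℝ))
        * rexp (-γ * (E (k+1) ω / ((k+1 : ℕ):ℝ))))]
    rw [integral_congr_ae (hSg_cond j)]
    exact integral_mul_const _ _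
  -- splitting identity
  have key : ∀ j, j ≤ k + 1 → ∀ ω : Ω,
      rexp (-γ * ∑ h ∈ Finset.Icc j (k+1), E h ω / (h:ℝ))
        = rexp (-γ * ∑ h ∈ Finset.Icc j k, E h ω / (h:ℝ))
          * rexp (-γ * (E (k+1) ω / ((k+1 : ℕ):ℝ))) := by
    intro j hj ω
    rw [Finset.sum_Icc_succ_top hj, mul_add, Real.exp_add]
  -- rewriting W (k+1)
  have hW1 : W (k+1) = (fun ω =>
      (∑ j ∈ Finset.Icc 1 (k+1), (f j - f (j-1))
        * rexp (-γ * ∑ h ∈ Finset.Icc j k, E h ω / (h:ℝ)))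
        * rexp (-γ * (E (k+1) ω / ((k+1 : ℕ):ℝ))))
      - (fun _ => ∑ j ∈ Finset.Icc 1 (k+1), (f j - f (j-1)) *
          ((∫ ω', rexp (-γ * ∑ h ∈ Finset.Icc j k, E h ω' / (h:ℝ)) ∂μ)
            * ∫ ω', rexp (-γ * (E (k+1) ω' / ((k+1 : ℕ):ℝ))) ∂μ)) := by
    funext ω
    rw [hW (k+1) ω]
    have hterm : ∀ j ∈ Finset.Icc 1 (k+1), (f j - f (j-1)) *
        (rexp (-γ * ∑ h ∈ Finset.Icc j (k+1), E h ω / (h:ℝ))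
          - ∫ ω', rexp (-γ * ∑ h ∈ Finset.Icc j (k+1), E h ω' / (h:ℝ)) ∂μ)
        = (f j - f (j-1)) * (rexp (-γ * ∑ h ∈ Finset.Icc j k, E h ω / (h:ℝ))
              * rexp (-γ * (E (k+1) ω / ((k+1 : ℕ):ℝ))))
          - (f j - f (j-1)) *
            ((∫ ω', rexp (-γ * ∑ h ∈ Finset.Icc j k, E h ω' / (h:ℝ)) ∂μ)
              * ∫ ω', rexp (-γ * (E (k+1) ω' / ((k+1 : ℕ):ℝ))) ∂μ) := by
      intro j hj
      have hj' : j ≤ k + 1 := (Finset.mem_Icc.1 hj).2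
      rw [key j hj' ω,
        integral_congr_ae (Filter.EventuallyEq.of_eq (funext fun ω' => key j hj' ω')),
        hQ j, mul_sub]
    rw [Finset.sum_congr rfl hterm, Finset.sum_sub_distrib]
    simp only [Pi.sub_apply]
    congr 1
    rw [Finset.sum_mul]
    exact Finset.sum_congr rfl fun j _ => by ring
  -- measurability and integrability of the product F * g
  have hF_meas : StronglyMeasurable[(MeasureTheory.Filtration.natural E hsm) k]
      (fun ω => ∑ j ∈ Finset.Icc 1 (k+1), (f j - f (j-1))
        * rexp (-γ * ∑ h ∈ Finset.Icc j k, E h ω / (h:ℝ))) :=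
    Finset.stronglyMeasurable_fun_sum _ fun j _ => (hS_meas j).const_mul _
  have hFg_int : Integrable (fun ω =>
      (∑ j ∈ Finset.Icc 1 (k+1), (f j - f (j-1))
        * rexp (-γ * ∑ h ∈ Finset.Icc j k, E h ω / (h:ℝ)))
        * rexp (-γ * (E (k+1) ω / ((k+1 : ℕ):ℝ)))) μ := by
    have heq2 : (fun ω =>
        (∑ j ∈ Finset.Icc 1 (k+1), (f j - f (j-1))
          * rexp (-γ * ∑ h ∈ Finset.Icc j k, E h ω / (h:ℝ)))
          * rexp (-γ * (E (k+1) ω / ((k+1 : ℕ):ℝ))))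
        = fun ω => ∑ j ∈ Finset.Icc 1 (k+1), (f j - f (j-1)) *
            (rexp (-γ * ∑ h ∈ Finset.Icc j k, E h ω / (h:ℝ))
              * rexp (-γ * (E (k+1) ω / ((k+1 : ℕ):ℝ)))) := by
      funext ω
      rw [Finset.sum_mul]
      exact Finset.sum_congr rfl fun j _ => by ring
    rw [heq2]
    exact integrable_finset_sum _ fun j _ => (hSg_int j).const_mul _
  -- main computation
  rw [hW1]
  calc μ[(fun ω =>
      (∑ j ∈ Finset.Icc 1 (k+1), (f j - f (j-1))
        * rexp (-γ * ∑ h ∈ Finset.Icc j k, E h ω / (h:ℝ)))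
        * rexp (-γ * (E (k+1) ω / ((k+1 : ℕ):ℝ))))
      - (fun _ => ∑ j ∈ Finset.Icc 1 (k+1), (f j - f (j-1)) *
          ((∫ ω', rexp (-γ * ∑ h ∈ Finset.Icc j k, E h ω' / (h:ℝ)) ∂μ)
            * ∫ ω', rexp (-γ * (E (k+1) ω' / ((k+1 : ℕ):ℝ))) ∂μ))
      | (MeasureTheory.Filtration.natural E hsm) k]
      =ᵐ[μ] μ[(fun ω =>
        (∑ j ∈ Finset.Icc 1 (k+1), (f j - f (j-1))
          * rexp (-γ * ∑ h ∈ Finset.Icc j k, E h ω / (h:ℝ)))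
          * rexp (-γ * (E (k+1) ω / ((k+1 : ℕ):ℝ))))
        | (MeasureTheory.Filtration.natural E hsm) k]
      - μ[(fun _ => ∑ j ∈ Finset.Icc 1 (k+1), (f j - f (j-1)) *
          ((∫ ω', rexp (-γ * ∑ h ∈ Finset.Icc j k, E h ω' / (h:ℝ)) ∂μ)
            * ∫ ω', rexp (-γ * (E (k+1) ω' / ((k+1 : ℕ):ℝ))) ∂μ))
        | (MeasureTheory.Filtration.natural E hsm) k] :=
        condExp_sub hFg_int (integrable_const _) _
    _ =ᵐ[μ] fun ω =>
        (∑ j ∈ Finset.Icc 1 (k+1), (f j - f (j-1))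
          * rexp (-γ * ∑ h ∈ Finset.Icc j k, E h ω / (h:ℝ)))
          * (∫ ω', rexp (-γ * (E (k+1) ω' / ((k+1 : ℕ):ℝ))) ∂μ)
        - ∑ j ∈ Finset.Icc 1 (k+1), (f j - f (j-1)) *
          ((∫ ω', rexp (-γ * ∑ h ∈ Finset.Icc j k, E h ω' / (h:ℝ)) ∂μ)
            * ∫ ω', rexp (-γ * (E (k+1) ω' / ((k+1 : ℕ):ℝ))) ∂μ) := by
        have h1 : μ[(fun ω =>
            (∑ j ∈ Finset.Icc 1 (k+1), (f j - f (j-1))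
              * rexp (-γ * ∑ h ∈ Finset.Icc j k, E h ω / (h:ℝ)))
              * rexp (-γ * (E (k+1) ω / ((k+1 : ℕ):ℝ))))
            | (MeasureTheory.Filtration.natural E hsm) k] =ᵐ[μ]
            fun ω => (∑ j ∈ Finset.Icc 1 (k+1), (f j - f (j-1))
              * rexp (-γ * ∑ h ∈ Finset.Icc j k, E h ω / (h:ℝ)))
              * ∫ ω', rexp (-γ * (E (k+1) ω' / ((k+1 : ℕ):ℝ))) ∂μ :=
          (condExp_mul_of_stronglyMeasurable_left hF_meas hFg_int hg_int).trans
            (Filter.EventuallyEq.mul (Filter.EventuallyEq.refl _ _) hcondg)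
        have h2 := condExp_const hle (∑ j ∈ Finset.Icc 1 (k+1), (f j - f (j-1)) *
          ((∫ ω', rexp (-γ * ∑ h ∈ Finset.Icc j k, E h ω' / (h:ℝ)) ∂μ)
            * ∫ ω', rexp (-γ * (E (k+1) ω' / ((k+1 : ℕ):ℝ))) ∂μ)) (μ := μ)
        filter_upwards [h1] with ω hω1
        simp only [Pi.sub_apply, hω1, h2]
    _ = fun ω => (1 + γ / (k + 1))⁻¹ * W k ω := by
        funext ω
        rw [hW k ω]
        have hcast : (1 + γ / ((k:ℝ) + 1))⁻¹
            = ∫ ω', rexp (-γ * (E (k+1) ω' / ((k+1 : ℕ):ℝ))) ∂μ := by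
          rw [hm]; push_cast; ring_nf
        rw [hcast]
        have hsplit1 : ∑ j ∈ Finset.Icc 1 (k+1), (f j - f (j-1))
            * rexp (-γ * ∑ h ∈ Finset.Icc j k, E h ω / (h:ℝ))
            = ∑ j ∈ Finset.Icc 1 k, (f j - f (j-1))
              * rexp (-γ * ∑ h ∈ Finset.Icc j k, E h ω / (h:ℝ))
              + (f (k+1) - f (k+1-1)) * 1 := by
          rw [Finset.sum_Icc_succ_top (Nat.succ_le_succ (Nat.zero_le k))]
          congr 1
          rw [Finset.Icc_eq_empty_of_lt (Nat.lt_succ_self k)]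
          simp
        have hsplit2 : ∑ j ∈ Finset.Icc 1 (k+1), (f j - f (j-1)) *
            ((∫ ω', rexp (-γ * ∑ h ∈ Finset.Icc j k, E h ω' / (h:ℝ)) ∂μ)
              * ∫ ω', rexp (-γ * (E (k+1) ω' / ((k+1 : ℕ):ℝ))) ∂μ)
            = ∑ j ∈ Finset.Icc 1 k, (f j - f (j-1)) *
              ((∫ ω', rexp (-γ * ∑ h ∈ Finset.Icc j k, E h ω' / (h:ℝ)) ∂μ)
                * ∫ ω', rexp (-γ * (E (k+1) ω' / ((k+1 : ℕ):ℝ))) ∂μ)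
              + (f (k+1) - f (k+1-1))
                * (1 * ∫ ω', rexp (-γ * (E (k+1) ω' / ((k+1 : ℕ):ℝ))) ∂μ) := by
          rw [Finset.sum_Icc_succ_top (Nat.succ_le_succ (Nat.zero_le k))]
          congr 3
          rw [Finset.Icc_eq_empty_of_lt (Nat.lt_succ_self k)]
          simp
        rw [hsplit1, hsplit2]
        exact alg_aux (Finset.Icc 1 k) _ _ _ _ _
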